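/- arXiv:2205.00527 — 2 statements merged into one kernel-verified Lean document; each statement's English description precedes it below -/
import Mathlib

section
/- Let N, j, n be nonnegative integers with j ≤ N. The number of partitions π with all parts ≤ N satisfying O(π) = n and γ(π) = j equals the number of 2-color partitions (ρ, σ) of n (ρ red, σ green) such that ρ has exactly j parts and the largest part of σ is at most N − j. -/
/-- Sum of `f` over the entries of a list at even 0-based positions, i.e. over the
odd-indexed parts `λ1, λ3, λ5, …` of a partition `(λ1, λ2, λ3, …)`. -/
def sumAlt (f : ℕ → ℕ) : List ℕ → ℕ
  | [] => 0
  | [a] => f a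
  | a :: _ :: l => f a + sumAlt f l

/-- `O(π) = λ1 + λ3 + λ5 + ⋯`, the sum of the odd-indexed parts. -/
def Osum (l : List ℕ) : ℕ := sumAlt id l

/-- `E(π) = λ2 + λ4 + λ6 + ⋯`, the sum of the even-indexed parts. -/
def Esum (l : List ℕ) : ℕ := sumAlt id l.tail

/-- `γ(π) = λ1 − λ2 + λ3 − λ4 + ⋯ = O(π) − E(π)`, the alternating sum of the parts.
For a weakly decreasing list we have `Osum l ≥ Esum l`, so natural subtraction is exact. -/
def gammaSum (l : List ℕ) : ℕ := Osum l - Esum l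

/-- `⌈O⌉(π) = ∑ ⌈λ_{2i−1}/2⌉`. -/
def ceilO (l : List ℕ) : ℕ := sumAlt (fun a => (a + 1) / 2) l

/-- `⌊O⌋(π) = ∑ ⌊λ_{2i−1}/2⌋`. -/
def floorO (l : List ℕ) : ℕ := sumAlt (fun a => a / 2) l

/-- `⌈E⌉(π) = ∑ ⌈λ_{2i}/2⌉`. -/
def ceilE (l : List ℕ) : ℕ := sumAlt (fun a => (a + 1) / 2) l.tail

/-- `⌊E⌋(π) = ∑ ⌊λ_{2i}/2⌋`. -/
def floorE (l : List ℕ) : ℕ := sumAlt (fun a => a / 2) l.tail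

/-- A partition: a weakly decreasing finite list of positive integers. -/
def IsPartition (l : List ℕ) : Prop := l.Pairwise (· ≥ ·) ∧ ∀ x ∈ l, 0 < x

/-- A partition into distinct parts: a strictly decreasing finite list of positive integers. -/
def IsDistinctPartition (l : List ℕ) : Prop := l.Pairwise (· > ·) ∧ ∀ x ∈ l, 0 < x

/-- The Gaussian binomial coefficient `[n choose k]_q` as a polynomial in `q`
(defined by the q-Pascal recurrence; it equals `(q;q)_n / ((q;q)_k (q;q)_{n−k})`). -/
noncomputable def qbinom : ℕ → ℕ → Polynomial ℤ
  | _, 0 => 1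
  | 0, _ + 1 => 0
  | n + 1, k + 1 => qbinom n k + Polynomial.X ^ (k + 1) * qbinom n (k + 1)

-- auxiliary lemmas
lemma aux_sum_map_sub (l : List ℕ) (h : ∀ x ∈ l, 1 ≤ x) :
    (l.map (· - 1)).sum + l.length = l.sum := by
  induction l with
  | nil => simp
  | cons a t ih =>
      have ha : 1 ≤ a := h a (by simp)
      have := ih (fun x hx => h x (by simp [hx]))
      simp only [List.map_cons, List.sum_cons, List.length_cons]
      omega

lemma aux_sum_filter_le (p : ℕ → Bool) (l : List ℕ) : (l.filter p).sum ≤ l.sum := by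
  induction l with
  | nil => simp
  | cons a t ih =>
      by_cases h : p a <;> simp [List.filter_cons, h] <;> omega

def F : List ℕ → List ℕ × List ℕ
  | [] => ([], [])
  | [a] => (List.replicate a 1, [])
  | a :: b :: t =>
      ((F t).1.map (· + 1) ++ List.replicate (a - b) 1,
       if b - (F t).1.length = 0 then (F t).2 else (b - (F t).1.length) :: (F t).2)

lemma aux_attach_eq (ρ : List ℕ) : List.map (fun x : {x // x ∈ ρ} => (x : ℕ) - 1)
    (List.filter (fun x : {x // x ∈ ρ} => decide (2 ≤ (x : ℕ))) ρ.attach) =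
      (ρ.filter (fun x => 2 ≤ x)).map (· - 1) := by
  rw [List.map_subtype (f := fun x : {x // x ∈ ρ} => (x : ℕ) - 1) (g := fun x => x - 1) (fun _ _ => rfl),
    List.unattach_filter (f := fun x : {x // x ∈ ρ} => decide (2 ≤ (x : ℕ))) (g := fun x => decide (2 ≤ x))
      (hf := fun _ _ => rfl), List.unattach_attach]

def G (ρ σ : List ℕ) : List ℕ :=
  if ρ = [] ∧ σ = [] then []
  else
    let d := ρ.count 1
    let ρ' := (ρ.filter (fun x => 2 ≤ x)).map (· - 1)
    let b := σ.headI + ρ'.length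
    if b = 0 then [b + d] else (b + d) :: b :: G ρ' σ.tail
termination_by ρ.length + ρ.sum + σ.length
decreasing_by
  rename_i h _
  have hatt := aux_attach_eq ρ
  rw [hatt]
  have hmem : ∀ x ∈ ρ.filter (fun x => 2 ≤ x), 1 ≤ x := by
    intro x hx
    have := List.mem_filter.mp hx
    have := of_decide_eq_true this.2
    omega
  have h1 := aux_sum_map_sub (ρ.filter (fun x => 2 ≤ x)) hmem
  have h2 := aux_sum_filter_le (fun x => decide (2 ≤ x)) ρ
  simp only [List.length_map]
  cases σ with
  | nil =>
      have hρ : ρ ≠ [] := by intro hh; exact h ⟨hh, rfl⟩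
      have : 1 ≤ ρ.length := List.length_pos_iff.mpr hρ
      simp only [List.tail_nil, List.length_nil]
      omega
  | cons c s => simp only [List.tail_cons, List.length_cons]; omega

lemma G_eq_pos {ρ σ : List ℕ} (h : ¬(ρ = [] ∧ σ = []))
    (hb : ¬ σ.headI + ((ρ.filter (fun x => 2 ≤ x)).map (fun x => x - 1)).length = 0) :
    G ρ σ = (σ.headI + ((ρ.filter (fun x => 2 ≤ x)).map (fun x => x - 1)).length + ρ.count 1) ::
      (σ.headI + ((ρ.filter (fun x => 2 ≤ x)).map (fun x => x - 1)).length) ::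
      G ((ρ.filter (fun x => 2 ≤ x)).map (fun x => x - 1)) σ.tail := by
  rw [G, if_neg h]
  simp only []
  rw [if_neg hb]

lemma G_eq_zero {ρ σ : List ℕ} (h : ¬(ρ = [] ∧ σ = []))
    (hb : σ.headI + ((ρ.filter (fun x => 2 ≤ x)).map (fun x => x - 1)).length = 0) :
    G ρ σ = [ρ.count 1] := by
  rw [G, if_neg h]
  simp only []
  rw [if_pos hb, hb]
  simp

lemma G_nil_nil : G [] [] = [] := by rw [G]; simp

-- Osum / Esum / gamma lemmas
lemma osum_nil : Osum [] = 0 := rfl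
lemma osum_single (a : ℕ) : Osum [a] = a := rfl
lemma osum_cons_cons (a b : ℕ) (t : List ℕ) : Osum (a :: b :: t) = a + Osum t := rfl
lemma esum_nil : Esum [] = 0 := rfl
lemma esum_single (a : ℕ) : Esum [a] = 0 := rfl
lemma esum_cons_cons (a b : ℕ) (t : List ℕ) : Esum (a :: b :: t) = b + Esum t := by
  cases t <;> rfl

lemma sorted_cons_cons {a b : ℕ} {t : List ℕ} (h : (a :: b :: t).Pairwise (· ≥ ·)) :
    a ≥ b ∧ (∀ x ∈ t, b ≥ x) ∧ t.Pairwise (· ≥ ·) := by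
  rw [List.pairwise_cons, List.pairwise_cons] at h
  exact ⟨h.1 b (by simp), h.2.1, h.2.2⟩

lemma sorted_le_headI {l : List ℕ} (h : l.Pairwise (· ≥ ·)) : ∀ x ∈ l, x ≤ l.headI := by
  cases l with
  | nil => simp
  | cons a t =>
      intro x hx
      rcases List.mem_cons.mp hx with rfl | hx
      · simp
      · exact (List.pairwise_cons.mp h).1 x hx

lemma tail_headI_le {l : List ℕ} (h : l.Pairwise (· ≥ ·)) : l.tail.headI ≤ l.headI := by
  cases l with
  | nil => simp
  | cons a t =>
      cases t with
      | nil => simp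
      | cons c s => exact (List.pairwise_cons.mp h).1 c (by simp)

lemma esum_le_osum {l : List ℕ} (h : l.Pairwise (· ≥ ·)) : Esum l ≤ Osum l := by
  induction l using F.induct with
  | case1 => simp [osum_nil, esum_nil]
  | case2 a => simp [osum_single, esum_single]
  | case3 a b t ih =>
      obtain ⟨hab, _, ht⟩ := sorted_cons_cons h
      have := ih ht
      rw [osum_cons_cons, esum_cons_cons]
      omega

lemma gamma_nil : gammaSum [] = 0 := rfl
lemma gamma_single (a : ℕ) : gammaSum [a] = a := rfl

lemma gamma_cons_cons {a b : ℕ} {t : List ℕ} (h : (a :: b :: t).Pairwise (· ≥ ·)) :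
    gammaSum (a :: b :: t) = (a - b) + gammaSum t := by
  obtain ⟨hab, _, ht⟩ := sorted_cons_cons h
  have := esum_le_osum ht
  unfold gammaSum
  rw [osum_cons_cons, esum_cons_cons]
  omega

lemma gamma_le_headI {l : List ℕ} (h : l.Pairwise (· ≥ ·)) : gammaSum l ≤ l.headI := by
  induction l using F.induct with
  | case1 => simp [gamma_nil]
  | case2 a => simp [gamma_single]
  | case3 a b t ih =>
      obtain ⟨hab, hbt, ht⟩ := sorted_cons_cons h
      have h1 := ih ht
      have h2 : t.headI ≤ b := by
        cases t with
        | nil => simp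
        | cons c s => exact hbt c (by simp)
      rw [gamma_cons_cons h]
      simp only [List.headI_cons]
      omega

lemma sorted_replicate (n c : ℕ) : (List.replicate n c).Pairwise (· ≥ ·) := by
  induction n with
  | zero => simp
  | succ m ih =>
      rw [List.replicate_succ, List.pairwise_cons]
      exact ⟨fun b hb => by simp [List.eq_of_mem_replicate hb], ih⟩

lemma aux_sum_map_succ (l : List ℕ) : (l.map (· + 1)).sum = l.sum + l.length := by
  induction l with
  | nil => simp
  | cons a t ih => simp [ih]; omega

lemma F_spec (l : List ℕ) (hs : l.Pairwise (· ≥ ·)) (hp : ∀ x ∈ l, 0 < x) :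
    (F l).1.Pairwise (· ≥ ·) ∧ (∀ x ∈ (F l).1, 0 < x) ∧
    (F l).2.Pairwise (· ≥ ·) ∧ (∀ x ∈ (F l).2, 0 < x) ∧
    (F l).1.length = gammaSum l ∧ (F l).1.sum + (F l).2.sum = Osum l ∧
    (∀ x ∈ (F l).2, x + gammaSum l ≤ l.headI) := by
  induction l using F.induct with
  | case1 => simp [F, gamma_nil, osum_nil]
  | case2 a =>
      refine ⟨sorted_replicate a 1, ?_, by simp [F], by simp [F], ?_, ?_, by simp [F]⟩
      · intro x hx
        simp only [F] at hx
        simp [List.eq_of_mem_replicate hx]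
      · simp [F, gamma_single]
      · simp [F, osum_single]
  | case3 a b t ih =>
      obtain ⟨hab, hbt, ht⟩ := sorted_cons_cons hs
      have htpos : ∀ x ∈ t, 0 < x := fun x hx => hp x (by simp [hx])
      have hbpos : 0 < b := hp b (by simp)
      obtain ⟨s1, p1, s2, p2, hlen, hsum, hbd⟩ := ih ht htpos
      have hth : t.headI ≤ b := by
        cases t with
        | nil => simp
        | cons c s => exact hbt c (by simp)
      have hgt : gammaSum t ≤ b := le_trans (gamma_le_headI ht) hth
      have hgl : gammaSum (a :: b :: t) = (a - b) + gammaSum t := gamma_cons_cons hs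
      have hσ'le : ∀ x ∈ (F t).2, x ≤ b - gammaSum t := by
        intro x hx
        have := hbd x hx
        omega
      constructor
      · show ((F t).1.map (· + 1) ++ List.replicate (a - b) 1).Pairwise (· ≥ ·)
        rw [List.pairwise_append]
        refine ⟨List.Pairwise.map _ (fun x y h => by omega) s1, sorted_replicate _ 1, ?_⟩
        intro x hx y hy
        obtain ⟨z, _, rfl⟩ := List.mem_map.mp hx
        have := List.eq_of_mem_replicate hy
        omega
      refine ⟨?_, ?_, ?_, ?_, ?_, ?_⟩
      · intro x hx
        simp only [F, List.mem_append] at hx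
        rcases hx with hx | hx
        · obtain ⟨z, _, rfl⟩ := List.mem_map.mp hx
          omega
        · simp [List.eq_of_mem_replicate hx]
      · show (if b - (F t).1.length = 0 then (F t).2
              else (b - (F t).1.length) :: (F t).2).Pairwise (· ≥ ·)
        split
        · exact s2
        · rw [List.pairwise_cons]
          exact ⟨fun x hx => by have := hσ'le x hx; omega, s2⟩
      · show ∀ x ∈ (if b - (F t).1.length = 0 then (F t).2
              else (b - (F t).1.length) :: (F t).2), 0 < x
        split
        · exact p2
        · rename_i hv
          intro x hx
          rcases List.mem_cons.mp hx with rfl | hx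
          · omega
          · exact p2 x hx
      · show ((F t).1.map (· + 1) ++ List.replicate (a - b) 1).length = _
        rw [List.length_append, List.length_map, List.length_replicate, hlen, hgl]
        omega
      · show ((F t).1.map (· + 1) ++ List.replicate (a - b) 1).sum +
             (if b - (F t).1.length = 0 then (F t).2
              else (b - (F t).1.length) :: (F t).2).sum = Osum (a :: b :: t)
        rw [List.sum_append, aux_sum_map_succ, osum_cons_cons]
        split
        · rename_i hv
          rw [hlen] at hv ⊢
          simp only [List.sum_replicate, smul_eq_mul, mul_one]
          omega
        · rename_i hv
          rw [hlen] at hv ⊢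
          simp only [List.sum_replicate, smul_eq_mul, mul_one, List.sum_cons]
          omega
      · show ∀ x ∈ (if b - (F t).1.length = 0 then (F t).2
              else (b - (F t).1.length) :: (F t).2), x + gammaSum (a :: b :: t) ≤ (a :: b :: t).headI
        rw [hgl]
        simp only [List.headI_cons]
        split
        · intro x hx
          have := hbd x hx
          omega
        · rename_i hv
          rw [hlen] at hv
          intro x hx
          rcases List.mem_cons.mp hx with rfl | hx
          · rw [hlen]; omega
          · have := hbd x hx; omega

lemma rho_decomp {ρ : List ℕ} (hs : ρ.Pairwise (· ≥ ·)) (hp : ∀ x ∈ ρ, 0 < x) :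
    ρ.filter (fun x => 2 ≤ x) ++ List.replicate (ρ.count 1) 1 = ρ := by
  induction ρ with
  | nil => simp
  | cons x t ih =>
      have hxpos : 0 < x := hp x (by simp)
      by_cases hx : 2 ≤ x
      · have ht := (List.pairwise_cons.mp hs).2
        have htp : ∀ y ∈ t, 0 < y := fun y hy => hp y (by simp [hy])
        have hx1 : x ≠ 1 := by omega
        rw [List.filter_cons_of_pos (by simpa using hx),
          List.count_cons_of_ne (by omega)]
        simp [ih ht htp]
      · have hx1 : x = 1 := by omega
        subst hx1
        have hall : ∀ y ∈ (1 :: t : List ℕ), y = 1 := by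
          intro y hy
          have h1 := sorted_le_headI hs y hy
          have h2 := hp y hy
          simp at h1
          omega
        have hrep := List.eq_replicate_of_mem hall
        rw [hrep]
        simp [List.filter_replicate, List.count_replicate]

lemma rho_decomp_length {ρ : List ℕ} (hs : ρ.Pairwise (· ≥ ·)) (hp : ∀ x ∈ ρ, 0 < x) :
    (ρ.filter (fun x => 2 ≤ x)).length + ρ.count 1 = ρ.length := by
  conv_rhs => rw [← rho_decomp hs hp]
  simp

lemma G_spec (ρ σ : List ℕ) (hρs : ρ.Pairwise (· ≥ ·)) (hρp : ∀ x ∈ ρ, 0 < x)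
    (hσs : σ.Pairwise (· ≥ ·)) (hσp : ∀ x ∈ σ, 0 < x) :
    (G ρ σ).Pairwise (· ≥ ·) ∧ (∀ x ∈ G ρ σ, 0 < x) ∧ (G ρ σ).headI = σ.headI + ρ.length := by
  induction ρ, σ using G.induct with
  | case1 ρ σ h =>
      obtain ⟨rfl, rfl⟩ := h
      rw [G_nil_nil]
      simp
  | case2 ρ σ h ρ' b hb =>
      have hρ' : ρ' = (ρ.filter (fun x => 2 ≤ x)).map (fun x => x - 1) := aux_attach_eq ρ
      have hb' : σ.headI + ((ρ.filter (fun x => 2 ≤ x)).map (fun x => x - 1)).length = 0 := by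
        rw [← hρ']; exact hb
      rw [G_eq_zero h hb']
      have hσnil : σ = [] := by
        cases σ with
        | nil => rfl
        | cons c s =>
            exfalso
            have := hσp c (by simp)
            simp at hb'
            omega
      subst hσnil
      have hρne : ρ ≠ [] := fun hh => h ⟨hh, rfl⟩
      simp only [List.headI_nil, List.length_map] at hb'
      have hcount : ρ.count 1 = ρ.length := by
        have := rho_decomp_length hρs hρp
        omega
      have hlpos : 0 < ρ.length := List.length_pos_iff.mpr hρne
      refine ⟨by simp, ?_, ?_⟩
      · intro x hx
        simp at hx
        omega
      · simp [hcount]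
  | case3 ρ σ h ρ' b hb ih =>
      have hρ' : ρ' = (ρ.filter (fun x => 2 ≤ x)).map (fun x => x - 1) := aux_attach_eq ρ
      rw [hρ'] at ih
      have hb' : ¬ σ.headI + ((ρ.filter (fun x => 2 ≤ x)).map (fun x => x - 1)).length = 0 := by
        rw [← hρ']; exact hb
      rw [G_eq_pos h hb']
      have hAs : ((ρ.filter (fun x => 2 ≤ x)).map (fun x => x - 1)).Pairwise (· ≥ ·) :=
        List.Pairwise.map _ (fun a b h => by omega) (List.Pairwise.filter _ hρs)
      have hAp : ∀ x ∈ (ρ.filter (fun x => 2 ≤ x)).map (fun x => x - 1), 0 < x := by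
        intro x hx
        obtain ⟨z, hz, rfl⟩ := List.mem_map.mp hx
        have := of_decide_eq_true (List.mem_filter.mp hz).2
        omega
      have ihs : (G ((ρ.filter (fun x => 2 ≤ x)).map (fun x => x - 1)) σ.tail).Pairwise (· ≥ ·) :=
        (ih hAs hAp hσs.tail (fun x hx => hσp x (List.mem_of_mem_tail hx))).1
      have ihp : ∀ x ∈ G ((ρ.filter (fun x => 2 ≤ x)).map (fun x => x - 1)) σ.tail, 0 < x :=
        (ih hAs hAp hσs.tail (fun x hx => hσp x (List.mem_of_mem_tail hx))).2.1
      have ihh : (G ((ρ.filter (fun x => 2 ≤ x)).map (fun x => x - 1)) σ.tail).headI =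
          σ.tail.headI + ((ρ.filter (fun x => 2 ≤ x)).map (fun x => x - 1)).length :=
        (ih hAs hAp hσs.tail (fun x hx => hσp x (List.mem_of_mem_tail hx))).2.2
      have hthl := tail_headI_le hσs
      have hGle : ∀ x ∈ G ((ρ.filter (fun x => 2 ≤ x)).map (fun x => x - 1)) σ.tail,
          x ≤ σ.headI + ((ρ.filter (fun x => 2 ≤ x)).map (fun x => x - 1)).length := by
        intro x hx
        have := sorted_le_headI ihs x hx
        omega
      have hlenf := rho_decomp_length hρs hρp
      refine ⟨?_, ?_, ?_⟩
      · rw [List.pairwise_cons, List.pairwise_cons]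
        refine ⟨?_, ⟨hGle, ihs⟩⟩
        intro y hy
        rcases List.mem_cons.mp hy with rfl | hy
        · omega
        · have := hGle y hy; omega
      · intro x hx
        rcases List.mem_cons.mp hx with rfl | hx
        · omega
        rcases List.mem_cons.mp hx with rfl | hx
        · omega
        · exact ihp x hx
      · simp only [List.headI_cons, List.length_map] at hb' ⊢
        omega

lemma FG (ρ σ : List ℕ) (hρs : ρ.Pairwise (· ≥ ·)) (hρp : ∀ x ∈ ρ, 0 < x)
    (hσs : σ.Pairwise (· ≥ ·)) (hσp : ∀ x ∈ σ, 0 < x) :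
    F (G ρ σ) = (ρ, σ) := by
  induction ρ, σ using G.induct with
  | case1 ρ σ h =>
      obtain ⟨rfl, rfl⟩ := h
      rw [G_nil_nil]
      simp [F]
  | case2 ρ σ h ρ' b hb =>
      have hρ' : ρ' = (ρ.filter (fun x => 2 ≤ x)).map (fun x => x - 1) := aux_attach_eq ρ
      have hb' : σ.headI + ((ρ.filter (fun x => 2 ≤ x)).map (fun x => x - 1)).length = 0 := by
        rw [← hρ']; exact hb
      rw [G_eq_zero h hb']
      have hσnil : σ = [] := by
        cases σ with
        | nil => rfl
        | cons c s =>
            exfalso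
            have := hσp c (by simp)
            simp at hb'
            omega
      subst hσnil
      have hρne : ρ ≠ [] := fun hh => h ⟨hh, rfl⟩
      simp only [List.headI_nil, List.length_map] at hb'
      have hfnil : ρ.filter (fun x => 2 ≤ x) = [] := List.length_eq_zero_iff.mp (by omega)
      have hall : ∀ y ∈ ρ, y = 1 := by
        intro y hy
        have h2 := hρp y hy
        have h3 := List.filter_eq_nil_iff.mp hfnil y hy
        simp at h3
        omega
      have hrep := List.eq_replicate_of_mem hall
      have hcount : ρ.count 1 = ρ.length := by
        have := rho_decomp_length hρs hρp
        rw [hfnil] at this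
        simpa using this
      rw [hcount, show F [ρ.length] = (List.replicate ρ.length 1, []) from rfl, ← hrep]
  | case3 ρ σ h ρ' b hb ih =>
      have hρ' : ρ' = (ρ.filter (fun x => 2 ≤ x)).map (fun x => x - 1) := aux_attach_eq ρ
      rw [hρ'] at ih
      have hb' : ¬ σ.headI + ((ρ.filter (fun x => 2 ≤ x)).map (fun x => x - 1)).length = 0 := by
        rw [← hρ']; exact hb
      rw [G_eq_pos h hb']
      have hAs : ((ρ.filter (fun x => 2 ≤ x)).map (fun x => x - 1)).Pairwise (· ≥ ·) :=
        List.Pairwise.map _ (fun a b h => by omega) (List.Pairwise.filter _ hρs)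
      have hAp : ∀ x ∈ (ρ.filter (fun x => 2 ≤ x)).map (fun x => x - 1), 0 < x := by
        intro x hx
        obtain ⟨z, hz, rfl⟩ := List.mem_map.mp hx
        have := of_decide_eq_true (List.mem_filter.mp hz).2
        omega
      have ih' : F (G ((ρ.filter (fun x => 2 ≤ x)).map (fun x => x - 1)) σ.tail) =
          ((ρ.filter (fun x => 2 ≤ x)).map (fun x => x - 1), σ.tail) :=
        ih hAs hAp hσs.tail (fun x hx => hσp x (List.mem_of_mem_tail hx))
      show F (_ :: _ :: G ((ρ.filter (fun x => 2 ≤ x)).map (fun x => x - 1)) σ.tail) = _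
      rw [F]
      rw [ih']
      have hsub : σ.headI + ((ρ.filter (fun x => 2 ≤ x)).map (fun x => x - 1)).length + ρ.count 1 -
          (σ.headI + ((ρ.filter (fun x => 2 ≤ x)).map (fun x => x - 1)).length) = ρ.count 1 := by
        omega
      have hsub2 : σ.headI + ((ρ.filter (fun x => 2 ≤ x)).map (fun x => x - 1)).length -
          ((ρ.filter (fun x => 2 ≤ x)).map (fun x => x - 1)).length = σ.headI := by
        omega
      have hmapmap : ((ρ.filter (fun x => 2 ≤ x)).map (fun x => x - 1)).map (· + 1) =
          ρ.filter (fun x => 2 ≤ x) := by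
        rw [List.map_map]
        have : ∀ x ∈ ρ.filter (fun x => 2 ≤ x), ((· + 1) ∘ fun x => x - 1) x = id x := by
          intro x hx
          have := of_decide_eq_true (List.mem_filter.mp hx).2
          simp
          omega
        rw [List.map_congr_left this, List.map_id]
      simp only [hsub, hsub2, hmapmap]
      rw [rho_decomp hρs hρp]
      cases σ with
      | nil =>
          simp
      | cons c s =>
          have hc : 0 < c := hσp c (by simp)
          simp only [List.headI_cons, List.tail_cons]
          simp [show c ≠ 0 by omega]

lemma GF (l : List ℕ) (hs : l.Pairwise (· ≥ ·)) (hp : ∀ x ∈ l, 0 < x) :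
    G (F l).1 (F l).2 = l := by
  induction l using F.induct with
  | case1 => simp [F, G_nil_nil]
  | case2 a =>
      have ha : 0 < a := hp a (by simp)
      rw [show F [a] = (List.replicate a 1, []) from rfl]
      have hfnil : (List.replicate a 1).filter (fun x => 2 ≤ x) = [] := by
        rw [List.filter_eq_nil_iff]
        intro x hx
        simp [List.eq_of_mem_replicate hx]
      have hne : ¬(List.replicate a 1 = ([] : List ℕ) ∧ ([] : List ℕ) = []) := by
        intro hh
        have := hh.1
        simp at this
        omega
      rw [G_eq_zero hne (by simp [hfnil])]
      simp [List.count_replicate]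
  | case3 a b t ih =>
      obtain ⟨hab, hbt, ht⟩ := sorted_cons_cons hs
      have htpos : ∀ x ∈ t, 0 < x := fun x hx => hp x (by simp [hx])
      have hbpos : 0 < b := hp b (by simp)
      obtain ⟨s1, p1, s2, p2, hlen, hsum, hbd⟩ := F_spec t ht htpos
      have hth : t.headI ≤ b := by
        cases t with
        | nil => simp
        | cons c s => exact hbt c (by simp)
      have hgt : gammaSum t ≤ b := le_trans (gamma_le_headI ht) hth
      -- notation
      rw [show F (a :: b :: t) =
        ((F t).1.map (· + 1) ++ List.replicate (a - b) 1,
         if b - (F t).1.length = 0 then (F t).2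
         else (b - (F t).1.length) :: (F t).2) from rfl]
      -- the filtered-mapped list recovers (F t).1
      have hfilter : ((F t).1.map (· + 1) ++ List.replicate (a - b) 1).filter (fun x => 2 ≤ x) =
          (F t).1.map (· + 1) := by
        rw [List.filter_append, List.filter_eq_self.mpr, List.filter_eq_nil_iff.mpr, List.append_nil]
        · intro x hx
          simp [List.eq_of_mem_replicate hx]
        · intro x hx
          obtain ⟨z, hz, rfl⟩ := List.mem_map.mp hx
          have := p1 z hz
          simp
          omega
      have hmapmap : (((F t).1.map (· + 1)).map (fun x => x - 1)) = (F t).1 := by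
        rw [List.map_map]
        have : ∀ x ∈ (F t).1, ((fun x => x - 1) ∘ (· + 1)) x = id x := by
          intro x hx
          simp
        rw [List.map_congr_left this, List.map_id]
      have hcount : ((F t).1.map (· + 1) ++ List.replicate (a - b) 1).count 1 = a - b := by
        rw [List.count_append, List.count_eq_zero.mpr, List.count_replicate]
        · simp
        · intro hmem
          obtain ⟨z, hz, hz1⟩ := List.mem_map.mp hmem
          have := p1 z hz
          omega
      -- head of second component
      have hheadI : (if b - (F t).1.length = 0 then (F t).2
          else (b - (F t).1.length) :: (F t).2).headI = b - gammaSum t := by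
        split
        · rename_i hv
          rw [hlen] at hv
          have hσnil : (F t).2 = [] := by
            cases hFt2 : (F t).2 with
            | nil => rfl
            | cons c s =>
                exfalso
                have hcmem : c ∈ (F t).2 := by rw [hFt2]; simp
                have := hbd c hcmem
                have := p2 c hcmem
                omega
          rw [hσnil]
          simp
          omega
        · rw [hlen]
          simp
      have htail : (if b - (F t).1.length = 0 then (F t).2
          else (b - (F t).1.length) :: (F t).2).tail = (F t).2 := by
        split
        · rename_i hv
          rw [hlen] at hv
          cases hFt2 : (F t).2 with
          | nil => simp
          | cons c s =>
              exfalso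
              have hcmem : c ∈ (F t).2 := by rw [hFt2]; simp
              have := hbd c hcmem
              have := p2 c hcmem
              omega
        · simp
      have hne : ¬((F t).1.map (· + 1) ++ List.replicate (a - b) 1 = [] ∧
          (if b - (F t).1.length = 0 then (F t).2
           else (b - (F t).1.length) :: (F t).2) = []) := by
        rintro ⟨h1, h2⟩
        have hh : (if b - (F t).1.length = 0 then (F t).2
            else (b - (F t).1.length) :: (F t).2).headI = 0 := by rw [h2]; rfl
        rw [hheadI] at hh
        rw [List.append_eq_nil_iff] at h1
        have hρ'nil : (F t).1 = [] := by
          cases hFt1 : (F t).1 with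
          | nil => rfl
          | cons c s => rw [hFt1] at h1; simp at h1
        have hγ0 : gammaSum t = 0 := by rw [← hlen, hρ'nil]; rfl
        omega
      have hbne : ¬ ((if b - (F t).1.length = 0 then (F t).2
            else (b - (F t).1.length) :: (F t).2).headI +
          ((((F t).1.map (· + 1) ++ List.replicate (a - b) 1).filter
            (fun x => 2 ≤ x)).map (fun x => x - 1)).length) = 0 := by
        rw [hheadI, hfilter, hmapmap, hlen]
        omega
      rw [G_eq_pos hne hbne]
      rw [hheadI, htail]
      simp only [hfilter, hmapmap, hcount, hlen]
      have e1 : b - gammaSum t + gammaSum t = b := by omega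
      rw [e1]
      have e2 : b + (a - b) = a := by omega
      rw [e2, ih ht htpos]

/-- **Refined Uncu–Andrews–Paule theorem.** For `j ≤ N`, the number of partitions with parts
`≤ N`, `O(π) = n` and `γ(π) = j` equals the number of 2-color partitions `(ρ, σ)` of `n`
(`ρ` red, `σ` green) where `ρ` has exactly `j` parts and every part of `σ` is `≤ N − j`. -/
theorem refined_uncu_andrews_paule (N j n : ℕ) (hj : j ≤ N) :
    Nat.card {l : List ℕ //
        IsPartition l ∧ (∀ x ∈ l, x ≤ N) ∧ Osum l = n ∧ gammaSum l = j} =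
      Nat.card {p : List ℕ × List ℕ //
        IsPartition p.1 ∧ IsPartition p.2 ∧ p.1.length = j ∧
          (∀ x ∈ p.2, x ≤ N - j) ∧ p.1.sum + p.2.sum = n} := by

  refine Nat.card_congr ⟨fun x => ⟨F x.1, ?_⟩, fun y => ⟨G y.1.1 y.1.2, ?_⟩, ?_, ?_⟩
  · obtain ⟨l, ⟨hs, hp⟩, hN, hO, hγ⟩ := x
    obtain ⟨s1, p1, s2, p2, hlen, hsum, hbd⟩ := F_spec l hs hp
    have hhead : l.headI ≤ N := by
      cases l with
      | nil => simp
      | cons c t => exact hN c (by simp)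
    exact ⟨⟨s1, p1⟩, ⟨s2, p2⟩, by rw [hlen, hγ],
      fun x hx => by have := hbd x hx; rw [hγ] at this; omega, by rw [hsum, hO]⟩
  · obtain ⟨⟨ρ, σ⟩, ⟨hρs, hρp⟩, ⟨hσs, hσp⟩, hlen, hbound, hsum⟩ := y
    obtain ⟨gs, gp, gh⟩ := G_spec ρ σ hρs hρp hσs hσp
    have hσh : σ.headI ≤ N - j := by
      cases σ with
      | nil => simp
      | cons c s => exact hbound c (by simp)
    have hfg := FG ρ σ hρs hρp hσs hσp
    obtain ⟨f1, f2, f3, f4, flen, fsum, fbd⟩ := F_spec (G ρ σ) gs gp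
    rw [hfg] at flen fsum
    have hlen' : ρ.length = j := hlen
    have hsum' : ρ.sum + σ.sum = n := hsum
    have flen' : ρ.length = gammaSum (G ρ σ) := flen
    have fsum' : ρ.sum + σ.sum = Osum (G ρ σ) := fsum
    refine ⟨⟨gs, gp⟩, ?_, ?_, ?_⟩
    · intro x hx
      have h2 := sorted_le_headI gs x hx
      rw [gh] at h2
      omega
    · show Osum (G ρ σ) = n
      omega
    · show gammaSum (G ρ σ) = j
      omega
  · intro x
    obtain ⟨l, ⟨hs, hp⟩, hN, hO, hγ⟩ := x
    exact Subtype.ext (GF l hs hp)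
  · intro y
    obtain ⟨⟨ρ, σ⟩, ⟨hρs, hρp⟩, ⟨hσs, hσp⟩, hlen, hbound, hsum⟩ := y
    exact Subtype.ext (FG ρ σ hρs hρp hσs hσp)
end

section
/- For every nonnegative integer N, the following identity holds in the polynomial ring ℤ[q, z]: ∑_{π ∈ D_{≤N}} q^{O(π)} z^{γ(π)} = ∑_{k=0}^{N} q^k z^k [N choose k]_q, where the sum on the left runs over the (finitely many) partitions into distinct parts all ≤ N. -/
/-! ### Auxiliary lemmas -/

lemma qbinom_zero_right (n : ℕ) : qbinom n 0 = 1 := by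
  cases n <;> rfl

lemma qbinom_eq_zero : ∀ {n k : ℕ}, n < k → qbinom n k = 0
  | 0, _ + 1, _ => rfl
  | n + 1, k + 1, h => by
    rw [show qbinom (n + 1) (k + 1)
        = qbinom n k + Polynomial.X ^ (k + 1) * qbinom n (k + 1) from rfl,
      qbinom_eq_zero (show n < k by omega), qbinom_eq_zero (show n < k + 1 by omega)]
    ring

lemma qbinom_self : ∀ n, qbinom n n = 1
  | 0 => rfl
  | n + 1 => by
    rw [show qbinom (n + 1) (n + 1)
        = qbinom n n + Polynomial.X ^ (n + 1) * qbinom n (n + 1) from rfl,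
      qbinom_self n, qbinom_eq_zero (show n < n + 1 by omega)]
    ring

lemma qbinom_one (n : ℕ) : qbinom n 1 = ∑ i ∈ Finset.range n, Polynomial.X ^ i := by
  induction n with
  | zero => simp [qbinom]
  | succ n ih =>
    rw [show qbinom (n + 1) 1 = qbinom n 0 + Polynomial.X ^ 1 * qbinom n 1 from rfl,
      qbinom_zero_right, ih, Finset.mul_sum, Finset.sum_range_succ']
    simp [← pow_succ', add_comm]

/-- The dual q-Pascal recurrence. -/
lemma qbinom_dual (n : ℕ) : ∀ k : ℕ,
    qbinom (n + 1) (k + 1) = Polynomial.X ^ (n - k) * qbinom n k + qbinom n (k + 1) := by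
  induction n with
  | zero =>
    intro k
    cases k with
    | zero =>
      rw [show qbinom 1 1 = qbinom 0 0 + Polynomial.X ^ 1 * qbinom 0 1 from rfl,
        qbinom_eq_zero (show 0 < 1 by omega)]
      norm_num [qbinom_zero_right]
    | succ j =>
      rw [show qbinom 1 (j + 1 + 1)
          = qbinom 0 (j + 1) + Polynomial.X ^ (j + 1 + 1) * qbinom 0 (j + 1 + 1) from rfl,
        qbinom_eq_zero (show 0 < j + 1 by omega), qbinom_eq_zero (show 0 < j + 2 by omega)]
      ring
  | succ n ih =>
    intro k
    cases k with
    | zero =>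
      rw [qbinom_one, qbinom_one, qbinom_zero_right, Finset.sum_range_succ, Nat.sub_zero,
        mul_one, add_comm]
    | succ j =>
      rcases lt_trichotomy j n with h | rfl | h
      · obtain ⟨m, rfl⟩ : ∃ m, n = j + 1 + m := ⟨n - (j + 1), by omega⟩
        rw [show qbinom (j + 1 + m + 1 + 1) (j + 1 + 1)
            = qbinom (j + 1 + m + 1) (j + 1)
              + Polynomial.X ^ (j + 1 + 1) * qbinom (j + 1 + m + 1) (j + 1 + 1) from rfl]
        nth_rewrite 2 [show qbinom (j + 1 + m + 1) (j + 1)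
            = qbinom (j + 1 + m) j + Polynomial.X ^ (j + 1) * qbinom (j + 1 + m) (j + 1) from rfl]
        nth_rewrite 2 [show qbinom (j + 1 + m + 1) (j + 1 + 1)
            = qbinom (j + 1 + m) (j + 1)
              + Polynomial.X ^ (j + 1 + 1) * qbinom (j + 1 + m) (j + 1 + 1) from rfl]
        rw [ih j, ih (j + 1)]
        rw [show j + 1 + m - j = m + 1 from by omega,
          show j + 1 + m - (j + 1) = m from by omega,
          show j + 1 + m + 1 - (j + 1) = m + 1 from by omega]
        ring
      · rw [show qbinom (j + 1 + 1) (j + 1 + 1)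
            = qbinom (j + 1) (j + 1)
              + Polynomial.X ^ (j + 1 + 1) * qbinom (j + 1) (j + 1 + 1) from rfl,
          qbinom_self, qbinom_eq_zero (show j + 1 < j + 2 by omega),
          show j + 1 - (j + 1) = 0 from by omega]
        ring
      · rw [qbinom_eq_zero (show n + 1 + 1 < j + 1 + 1 by omega),
          qbinom_eq_zero (show n + 1 < j + 1 by omega),
          qbinom_eq_zero (show n + 1 < j + 1 + 1 by omega)]
        ring

lemma sumAlt_cons (f : ℕ → ℕ) (a : ℕ) (l : List ℕ) :
    sumAlt f (a :: l) = f a + sumAlt f l.tail := by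
  cases l <;> simp [sumAlt]

lemma Osum_cons (a : ℕ) (l : List ℕ) : Osum (a :: l) = a + Esum l :=
  sumAlt_cons id a l

lemma Esum_cons (a : ℕ) (l : List ℕ) : Esum (a :: l) = Osum l := rfl

/-- Custom two-step induction for lists. -/
theorem List.pairInduction {motive : List ℕ → Prop} (h0 : motive [])
    (h1 : ∀ a, motive [a]) (h2 : ∀ a b t, motive t → motive (a :: b :: t)) :
    ∀ l, motive l
  | [] => h0
  | [a] => h1 a
  | a :: b :: t => h2 a b t (List.pairInduction h0 h1 h2 t)

lemma osum_esum_bounds : ∀ {l : List ℕ}, l.Pairwise (· ≥ ·) → ∀ {N : ℕ}, (∀ x ∈ l, x ≤ N) →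
    Esum l ≤ Osum l ∧ Osum l ≤ Esum l + N := by
  intro l
  induction l using List.pairInduction with
  | h0 => intro _ N _; simp [Osum, Esum, sumAlt]
  | h1 a =>
    intro _ N hN
    have := hN a (by simp)
    simp [Osum, Esum, sumAlt]; omega
  | h2 a b t ih =>
    intro hs N hN
    have hab : b ≤ a := (List.pairwise_cons.mp hs).1 b (by simp)
    have hts : t.Pairwise (· ≥ ·) := ((List.pairwise_cons.mp hs).2).tail
    have htb : ∀ x ∈ t, x ≤ b := (List.pairwise_cons.mp (List.pairwise_cons.mp hs).2).1
    have ha : a ≤ N := hN a (by simp)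
    obtain ⟨ih1, ih2⟩ := ih hts htb
    have e1 : Osum (a :: b :: t) = a + Osum t := by
      simp [Osum, sumAlt]
    have e2 : Esum (a :: b :: t) = b + Esum t := by
      simp [Esum, Osum, sumAlt_cons]
    omega

lemma sorted_gt_ge {l : List ℕ} (h : l.Pairwise (· > ·)) : l.Pairwise (· ≥ ·) :=
  h.imp (fun h => le_of_lt h)

/-- The descending list `[N, N-1, …, 1]`. -/
def desc : ℕ → List ℕ
  | 0 => []
  | n + 1 => (n + 1) :: desc n

lemma mem_desc : ∀ {N x : ℕ}, x ∈ desc N ↔ 0 < x ∧ x ≤ N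
  | 0, x => by simp [desc]; omega
  | N + 1, x => by
    simp [desc, mem_desc (N := N)]
    omega

lemma desc_sorted : ∀ N, (desc N).Pairwise (· > ·)
  | 0 => by simp [desc]
  | N + 1 => by
    rw [desc, List.pairwise_cons]
    exact ⟨fun x hx => by have := mem_desc.mp hx; omega, desc_sorted N⟩

lemma sublist_desc : ∀ (N : ℕ) {l : List ℕ}, l.Pairwise (· > ·) → (∀ x ∈ l, 0 < x) →
    (∀ x ∈ l, x ≤ N) → l.Sublist (desc N)
  | 0, l, _, hp, hN => by
    cases l with
    | nil => simp
    | cons a t => exact absurd (hN a (by simp)) (by have := hp a (by simp); omega)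
  | N + 1, l, hs, hp, hN => by
    cases l with
    | nil => simp
    | cons a t =>
      have hts : t.Pairwise (· > ·) := (List.pairwise_cons.mp hs).2
      have hta : ∀ x ∈ t, x < a := (List.pairwise_cons.mp hs).1
      rcases eq_or_lt_of_le (hN a (by simp)) with h | h
      · rw [desc]
        refine (sublist_desc N hts (fun x hx => hp x (by simp [hx]))
          (fun x hx => by have := hta x hx; omega)).cons₂ a |>.trans ?_
        rw [h]
      · exact (sublist_desc N hs hp (fun x hx => by
          rcases List.mem_cons.mp hx with rfl | hx
          · omega
          · have := hta x hx; omega)).trans (List.sublist_cons_self _ _)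

lemma mem_sublists'_desc {N : ℕ} {l : List ℕ} :
    l ∈ (desc N).sublists' ↔ IsDistinctPartition l ∧ ∀ x ∈ l, x ≤ N := by
  rw [List.mem_sublists']
  constructor
  · intro h
    refine ⟨⟨(desc_sorted N).sublist h, fun x hx => ?_⟩, fun x hx => ?_⟩
    · exact (mem_desc.mp (h.subset hx)).1
    · exact (mem_desc.mp (h.subset hx)).2
  · rintro ⟨⟨hs, hp⟩, hN⟩
    exact sublist_desc N hs hp hN

open MvPolynomial

noncomputable def Fpoly (N : ℕ) : MvPolynomial (Fin 2) ℤ :=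
  (((desc N).sublists').map
    (fun l => (X 0 : MvPolynomial (Fin 2) ℤ) ^ Osum l * X 1 ^ gammaSum l)).sum

noncomputable def Gpoly (N : ℕ) : MvPolynomial (Fin 2) ℤ :=
  (((desc N).sublists').map
    (fun l => (X 0 : MvPolynomial (Fin 2) ℤ) ^ Esum l * X 1 ^ (N - gammaSum l))).sum

lemma sum_ext (N : ℕ) :
    ∑ k ∈ Finset.range (N + 2),
        (X 0 : MvPolynomial (Fin 2) ℤ) ^ k * X 1 ^ k
          * Polynomial.aeval (X 0 : MvPolynomial (Fin 2) ℤ) (qbinom N k)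
    = ∑ k ∈ Finset.range (N + 1),
        (X 0 : MvPolynomial (Fin 2) ℤ) ^ k * X 1 ^ k
          * Polynomial.aeval (X 0 : MvPolynomial (Fin 2) ℤ) (qbinom N k) := by
  rw [Finset.sum_range_succ, qbinom_eq_zero (show N < N + 1 by omega)]
  simp

lemma sumF_succ (N : ℕ) :
    ∑ k ∈ Finset.range (N + 2),
        (X 0 : MvPolynomial (Fin 2) ℤ) ^ k * X 1 ^ k
          * Polynomial.aeval (X 0 : MvPolynomial (Fin 2) ℤ) (qbinom (N + 1) k)
    = ∑ k ∈ Finset.range (N + 1),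
        (X 0 : MvPolynomial (Fin 2) ℤ) ^ k * X 1 ^ k
          * Polynomial.aeval (X 0 : MvPolynomial (Fin 2) ℤ) (qbinom N k)
      + (X 0 : MvPolynomial (Fin 2) ℤ) ^ (N + 1) * X 1
        * ∑ k ∈ Finset.range (N + 1),
            (X 1 : MvPolynomial (Fin 2) ℤ) ^ k
              * Polynomial.aeval (X 0 : MvPolynomial (Fin 2) ℤ) (qbinom N k) := by
  have e1 : ∀ i ∈ Finset.range (N + 1),
      (X 0 : MvPolynomial (Fin 2) ℤ) ^ (i + 1) * X 1 ^ (i + 1)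
        * Polynomial.aeval (X 0 : MvPolynomial (Fin 2) ℤ) (qbinom (N + 1) (i + 1))
      = X 0 ^ (N + 1) * X 1
          * (X 1 ^ i * Polynomial.aeval (X 0 : MvPolynomial (Fin 2) ℤ) (qbinom N i))
        + X 0 ^ (i + 1) * X 1 ^ (i + 1)
          * Polynomial.aeval (X 0 : MvPolynomial (Fin 2) ℤ) (qbinom N (i + 1)) := by
    intro i hi
    have hiN : i ≤ N := by have := Finset.mem_range.mp hi; omega
    obtain ⟨m, rfl⟩ : ∃ m, N = i + m := ⟨N - i, by omega⟩
    rw [qbinom_dual, map_add, map_mul, map_pow, Polynomial.aeval_X,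
      show i + m - i = m from by omega]
    ring
  rw [Finset.sum_range_succ'
      (fun k => (X 0 : MvPolynomial (Fin 2) ℤ) ^ k * X 1 ^ k
        * Polynomial.aeval (X 0 : MvPolynomial (Fin 2) ℤ) (qbinom (N + 1) k)) (N + 1),
    Finset.sum_congr rfl e1, Finset.sum_add_distrib, ← Finset.mul_sum]
  have e2 : ∑ i ∈ Finset.range (N + 1),
      (X 0 : MvPolynomial (Fin 2) ℤ) ^ (i + 1) * X 1 ^ (i + 1)
        * Polynomial.aeval (X 0 : MvPolynomial (Fin 2) ℤ) (qbinom N (i + 1))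
      + (X 0 : MvPolynomial (Fin 2) ℤ) ^ 0 * X 1 ^ 0
        * Polynomial.aeval (X 0 : MvPolynomial (Fin 2) ℤ) (qbinom N 0)
      = ∑ k ∈ Finset.range (N + 2),
        (X 0 : MvPolynomial (Fin 2) ℤ) ^ k * X 1 ^ k
          * Polynomial.aeval (X 0 : MvPolynomial (Fin 2) ℤ) (qbinom N k) :=
    (Finset.sum_range_succ'
      (fun k => (X 0 : MvPolynomial (Fin 2) ℤ) ^ k * X 1 ^ k
        * Polynomial.aeval (X 0 : MvPolynomial (Fin 2) ℤ) (qbinom N k)) (N + 1)).symm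
  have e3 := sum_ext N
  have e4 : Polynomial.aeval (X 0 : MvPolynomial (Fin 2) ℤ) (qbinom (N + 1) 0)
      = Polynomial.aeval (X 0 : MvPolynomial (Fin 2) ℤ) (qbinom N 0) := by
    rw [qbinom_zero_right, qbinom_zero_right]
  linear_combination e2 + e3 + e4

lemma sumG_succ (N : ℕ) :
    ∑ k ∈ Finset.range (N + 2),
        (X 1 : MvPolynomial (Fin 2) ℤ) ^ k
          * Polynomial.aeval (X 0 : MvPolynomial (Fin 2) ℤ) (qbinom (N + 1) k)
    = (X 1 : MvPolynomial (Fin 2) ℤ)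
        * ∑ k ∈ Finset.range (N + 1),
            (X 1 : MvPolynomial (Fin 2) ℤ) ^ k
              * Polynomial.aeval (X 0 : MvPolynomial (Fin 2) ℤ) (qbinom N k)
      + ∑ k ∈ Finset.range (N + 1),
        (X 0 : MvPolynomial (Fin 2) ℤ) ^ k * X 1 ^ k
          * Polynomial.aeval (X 0 : MvPolynomial (Fin 2) ℤ) (qbinom N k) := by
  have e1 : ∀ i ∈ Finset.range (N + 1),
      (X 1 : MvPolynomial (Fin 2) ℤ) ^ (i + 1)
        * Polynomial.aeval (X 0 : MvPolynomial (Fin 2) ℤ) (qbinom (N + 1) (i + 1))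
      = X 1 * (X 1 ^ i * Polynomial.aeval (X 0 : MvPolynomial (Fin 2) ℤ) (qbinom N i))
        + X 0 ^ (i + 1) * X 1 ^ (i + 1)
          * Polynomial.aeval (X 0 : MvPolynomial (Fin 2) ℤ) (qbinom N (i + 1)) := by
    intro i _
    rw [show qbinom (N + 1) (i + 1)
        = qbinom N i + Polynomial.X ^ (i + 1) * qbinom N (i + 1) from rfl,
      map_add, map_mul, map_pow, Polynomial.aeval_X]
    ring
  rw [Finset.sum_range_succ'
      (fun k => (X 1 : MvPolynomial (Fin 2) ℤ) ^ k
        * Polynomial.aeval (X 0 : MvPolynomial (Fin 2) ℤ) (qbinom (N + 1) k)) (N + 1),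
    Finset.sum_congr rfl e1, Finset.sum_add_distrib, ← Finset.mul_sum]
  have e2 : ∑ i ∈ Finset.range (N + 1),
      (X 0 : MvPolynomial (Fin 2) ℤ) ^ (i + 1) * X 1 ^ (i + 1)
        * Polynomial.aeval (X 0 : MvPolynomial (Fin 2) ℤ) (qbinom N (i + 1))
      + (X 0 : MvPolynomial (Fin 2) ℤ) ^ 0 * X 1 ^ 0
        * Polynomial.aeval (X 0 : MvPolynomial (Fin 2) ℤ) (qbinom N 0)
      = ∑ k ∈ Finset.range (N + 2),
        (X 0 : MvPolynomial (Fin 2) ℤ) ^ k * X 1 ^ k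
          * Polynomial.aeval (X 0 : MvPolynomial (Fin 2) ℤ) (qbinom N k) :=
    (Finset.sum_range_succ'
      (fun k => (X 0 : MvPolynomial (Fin 2) ℤ) ^ k * X 1 ^ k
        * Polynomial.aeval (X 0 : MvPolynomial (Fin 2) ℤ) (qbinom N k)) (N + 1)).symm
  have e3 := sum_ext N
  have e4 : Polynomial.aeval (X 0 : MvPolynomial (Fin 2) ℤ) (qbinom (N + 1) 0)
      = Polynomial.aeval (X 0 : MvPolynomial (Fin 2) ℤ) (qbinom N 0) := by
    rw [qbinom_zero_right, qbinom_zero_right]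
  linear_combination e2 + e3 + e4

lemma FG_formula (N : ℕ) :
    Fpoly N = ∑ k ∈ Finset.range (N + 1),
        (X 0 : MvPolynomial (Fin 2) ℤ) ^ k * X 1 ^ k
          * Polynomial.aeval (X 0 : MvPolynomial (Fin 2) ℤ) (qbinom N k)
    ∧ Gpoly N = ∑ k ∈ Finset.range (N + 1),
        (X 1 : MvPolynomial (Fin 2) ℤ) ^ k
          * Polynomial.aeval (X 0 : MvPolynomial (Fin 2) ℤ) (qbinom N k) := by
  induction N with
  | zero =>
    constructor <;>
    · simp [Fpoly, Gpoly, desc, List.sublists', qbinom_zero_right, Osum, Esum, gammaSum, sumAlt]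
  | succ N ih =>
    obtain ⟨ihF, ihG⟩ := ih
    -- facts about elements of sublists' (desc N)
    have key : ∀ l ∈ (desc N).sublists',
        Esum l ≤ Osum l ∧ Osum l ≤ Esum l + N := by
      intro l hl
      obtain ⟨⟨hs, _⟩, hN⟩ := mem_sublists'_desc.mp hl
      exact osum_esum_bounds (sorted_gt_ge hs) hN
    have splitF : Fpoly (N + 1)
        = Fpoly N + (X 0 : MvPolynomial (Fin 2) ℤ) ^ (N + 1) * X 1 * Gpoly N := by
      rw [Fpoly, show desc (N + 1) = (N + 1) :: desc N from rfl, List.sublists'_cons,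
        List.map_append, List.sum_append, List.map_map]
      rw [show ((desc N).sublists'.map
          ((fun l => (X 0 : MvPolynomial (Fin 2) ℤ) ^ Osum l * X 1 ^ gammaSum l)
            ∘ (List.cons (N + 1)))).sum
        = ((desc N).sublists'.map
          (fun l => (X 0 : MvPolynomial (Fin 2) ℤ) ^ (N + 1) * X 1
            * (X 0 ^ Esum l * X 1 ^ (N - gammaSum l)))).sum from ?_]
      · rw [List.sum_map_mul_left]
        rfl
      · congr 1
        apply List.map_congr_left
        intro l hl
        obtain ⟨h1, h2⟩ := key l hl
        have e1 : Osum ((N + 1) :: l) = (N + 1) + Esum l := Osum_cons _ _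
        have e2 : gammaSum ((N + 1) :: l) = (N + 1) - gammaSum l := by
          rw [gammaSum, e1, Esum_cons, gammaSum]; omega
        have e3 : (N + 1) - gammaSum l = (N - gammaSum l) + 1 := by
          rw [gammaSum]; omega
        simp only [Function.comp_apply, e1, e2, e3]
        ring
    have splitG : Gpoly (N + 1) = X 1 * Gpoly N + Fpoly N := by
      rw [Gpoly, show desc (N + 1) = (N + 1) :: desc N from rfl, List.sublists'_cons,
        List.map_append, List.sum_append, List.map_map]
      congr 1
      · rw [show ((desc N).sublists'.map
            (fun l => (X 0 : MvPolynomial (Fin 2) ℤ) ^ Esum l * X 1 ^ (N + 1 - gammaSum l))).sum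
          = ((desc N).sublists'.map
            (fun l => (X 1 : MvPolynomial (Fin 2) ℤ)
              * (X 0 ^ Esum l * X 1 ^ (N - gammaSum l)))).sum from ?_]
        · rw [List.sum_map_mul_left]; rfl
        · congr 1
          apply List.map_congr_left
          intro l hl
          obtain ⟨h1, h2⟩ := key l hl
          have e3 : (N + 1) - gammaSum l = (N - gammaSum l) + 1 := by
            rw [gammaSum]; omega
          rw [e3]; ring
      · rw [Fpoly]
        congr 1
        apply List.map_congr_left
        intro l hl
        obtain ⟨h1, h2⟩ := key l hl
        have e1 : Esum ((N + 1) :: l) = Osum l := Esum_cons _ _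
        have e2 : gammaSum ((N + 1) :: l) = (N + 1) - gammaSum l := by
          rw [gammaSum, Osum_cons, Esum_cons, gammaSum]; omega
        have e4 : (N + 1) - ((N + 1) - gammaSum l) = gammaSum l := by
          rw [gammaSum]; omega
        simp only [Function.comp_apply, e1, e2, e4]
    constructor
    · rw [splitF, ihF, ihG]
      exact (sumF_succ N).symm
    · rw [splitG, ihG, ihF]
      exact (sumG_succ N).symm

open MvPolynomial in
/-- In `ℤ[q, z]` (with `q = X 0`, `z = X 1`):
`∑_{π ∈ D_{≤N}} q^{O(π)} z^{γ(π)} = ∑_{k=0}^{N} q^k z^k [N choose k]_q`. -/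
theorem distinct_odd_alternating_gf (N : ℕ) :
    ∑ᶠ l ∈ {l : List ℕ | IsDistinctPartition l ∧ ∀ x ∈ l, x ≤ N},
      (X 0 : MvPolynomial (Fin 2) ℤ) ^ Osum l * X 1 ^ gammaSum l
    = ∑ k ∈ Finset.range (N + 1),
        (X 0 : MvPolynomial (Fin 2) ℤ) ^ k * X 1 ^ k
          * Polynomial.aeval (X 0 : MvPolynomial (Fin 2) ℤ) (qbinom N k) := by
  have hset : {l : List ℕ | IsDistinctPartition l ∧ ∀ x ∈ l, x ≤ N}
      = ↑((desc N).sublists'.toFinset) := by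
    ext l
    simp only [Set.mem_setOf_eq, Finset.coe_sort_coe, Finset.mem_coe, List.mem_toFinset]
    exact mem_sublists'_desc.symm
  rw [hset, finsum_mem_coe_finset]
  have hnodup : (desc N).sublists'.Nodup :=
    List.nodup_sublists'.mpr ((desc_sorted N).nodup)
  rw [List.sum_toFinset _ hnodup]
  exact (FG_formula N).1
end
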